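/- arXiv:1809.05435 — 2 statements merged into one kernel-verified Lean document; each statement's English description precedes it below -/
import Mathlib

section
/- Let ν>0, τ≥0 and let S, D be symmetric 3×3 real matrices. The following are equivalent: (i) 2νD = ((|S| - τ)⁺/|S|) S (with the convention that the right side is 0 when S=0); (ii) setting Z := S - 2νD, one has |Z| ≤ τ and Z:D ≥ τ|D|. -/
noncomputable def fdot (A B : Matrix (Fin 3) (Fin 3) ℝ) : ℝ := ∑ i, ∑ j, A i j * B i j

noncomputable def fnorm (A : Matrix (Fin 3) (Fin 3) ℝ) : ℝ := Real.sqrt (fdot A A)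

/-- Transfer map to Euclidean space. -/
noncomputable def toE (A : Matrix (Fin 3) (Fin 3) ℝ) : EuclideanSpace ℝ (Fin 3 × Fin 3) :=
  WithLp.toLp 2 (fun p : Fin 3 × Fin 3 => A p.1 p.2)

lemma toE_inj {A B : Matrix (Fin 3) (Fin 3) ℝ} (h : toE A = toE B) : A = B := by
  ext i j; exact congrArg (fun v : EuclideanSpace ℝ (Fin 3 × Fin 3) => v (i, j)) h

lemma toE_smul (c : ℝ) (A : Matrix (Fin 3) (Fin 3) ℝ) : toE (c • A) = c • toE A := by ext p; simp [toE]

lemma toE_sub (A B : Matrix (Fin 3) (Fin 3) ℝ) : toE (A - B) = toE A - toE B := by ext p; simp [toE]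

lemma toE_zero : toE 0 = 0 := by ext p; simp [toE]

lemma fdot_toE (A B : Matrix (Fin 3) (Fin 3) ℝ) : fdot A B = (inner ℝ (toE A) (toE B) : ℝ) := by
  rw [PiLp.inner_apply]
  simp only [RCLike.inner_apply, conj_trivial]
  rw [Fintype.sum_prod_type]
  exact Finset.sum_congr rfl fun i _ => Finset.sum_congr rfl fun j _ => mul_comm _ _

lemma fnorm_toE (A : Matrix (Fin 3) (Fin 3) ℝ) : fnorm A = ‖toE A‖ := by
  rw [norm_eq_sqrt_real_inner, fnorm, fdot_toE]

open Classical in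
lemma abstract_bingham {E : Type*} [NormedAddCommGroup E] [InnerProductSpace ℝ E]
    (ν τ : ℝ) (hν : 0 < ν) (hτ : 0 ≤ τ) (x d : E) :
    ((2 * ν) • d = if x = 0 then 0 else (max (‖x‖ - τ) 0 / ‖x‖) • x) ↔
      (‖x - (2 * ν) • d‖ ≤ τ ∧ (inner ℝ (x - (2 * ν) • d) d : ℝ) ≥ τ * ‖d‖) := by
  have h2ν : (0:ℝ) < 2 * ν := by linarith
  constructor
  · intro h
    by_cases hx : x = 0
    · rw [if_pos hx] at h
      have hd : d = 0 := by
        rcases smul_eq_zero.mp h with h' | h'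
        · exact absurd h' (ne_of_gt h2ν)
        · exact h'
      subst hx; subst hd
      simp [hτ]
    · rw [if_neg hx] at h
      have hs0 : 0 < ‖x‖ := norm_pos_iff.mpr hx
      rcases le_or_gt ‖x‖ τ with hle | hlt
      · have hmax : max (‖x‖ - τ) 0 = 0 := max_eq_right (by linarith)
        rw [hmax, zero_div, zero_smul] at h
        have hd : d = 0 := by
          rcases smul_eq_zero.mp h with h' | h'
          · exact absurd h' (ne_of_gt h2ν)
          · exact h'
        subst hd
        constructor
        · simpa using hle
        · simp
      · have hmax : max (‖x‖ - τ) 0 = ‖x‖ - τ := max_eq_left (by linarith)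
        rw [hmax] at h
        have hz : x - (2 * ν) • d = (τ / ‖x‖) • x := by
          rw [h]
          rw [show x - ((‖x‖ - τ) / ‖x‖) • x = (1 - (‖x‖ - τ) / ‖x‖) • x by
            rw [sub_smul, one_smul]]
          congr 1
          field_simp
          ring
        have hxd : (2 * ν) * (inner ℝ x d : ℝ) = (‖x‖ - τ) * ‖x‖ := by
          have h' := congrArg (fun y => (inner ℝ x y : ℝ)) h
          simp only [real_inner_smul_right, real_inner_self_eq_norm_sq] at h'
          rw [h']
          field_simp
        have hnd : (2 * ν) * ‖d‖ = ‖x‖ - τ := by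
          have h' := congrArg norm h
          rw [norm_smul, norm_smul, Real.norm_eq_abs, Real.norm_eq_abs,
            abs_of_pos h2ν,
            abs_of_nonneg (div_nonneg (by linarith) (norm_nonneg x) : (0:ℝ) ≤ (‖x‖ - τ) / ‖x‖)] at h'
          rw [h']
          field_simp
        constructor
        · rw [hz, norm_smul, Real.norm_eq_abs, abs_of_nonneg (by positivity : (0:ℝ) ≤ τ / ‖x‖)]
          rw [div_mul_cancel₀ _ (ne_of_gt hs0)]
        · rw [hz, real_inner_smul_left]
          apply ge_of_eq
          have hd' : ‖d‖ = (‖x‖ - τ) / (2 * ν) := by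
            rw [eq_div_iff (ne_of_gt h2ν)]
            linarith
          have hxd' : (inner ℝ x d : ℝ) = (‖x‖ - τ) * ‖x‖ / (2 * ν) := by
            rw [eq_div_iff (ne_of_gt h2ν)]
            linarith
          rw [hd', hxd']
          field_simp
  · rintro ⟨h1, h2⟩
    set z := x - (2 * ν) • d with hzdef
    have hcs : (inner ℝ z d : ℝ) ≤ ‖z‖ * ‖d‖ := real_inner_le_norm z d
    have hzd_le : ‖z‖ * ‖d‖ ≤ τ * ‖d‖ := mul_le_mul_of_nonneg_right h1 (norm_nonneg d)
    have heq1 : (inner ℝ z d : ℝ) = τ * ‖d‖ := le_antisymm (hcs.trans hzd_le) h2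
    by_cases hd : d = 0
    · have hzx : z = x := by rw [hzdef, hd, smul_zero, sub_zero]
      by_cases hx : x = 0
      · rw [if_pos hx, hd, smul_zero]
      · rw [if_neg hx]
        have : max (‖x‖ - τ) 0 = 0 := max_eq_right (by rw [hzx] at h1; linarith)
        rw [this, zero_div, zero_smul, hd, smul_zero]
    · have hdn : 0 < ‖d‖ := norm_pos_iff.mpr hd
      have hzn_eq : ‖z‖ * ‖d‖ = τ * ‖d‖ := le_antisymm hzd_le (heq1 ▸ hcs)
      have hnz : ‖z‖ = τ := mul_right_cancel₀ (ne_of_gt hdn) hzn_eq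
      by_cases hτ0 : τ = 0
      · have hz0 : z = 0 := norm_eq_zero.mp (by rw [hnz, hτ0])
        have hxd : x = (2 * ν) • d := sub_eq_zero.mp hz0
        have hx : x ≠ 0 := by
          rw [hxd]
          simp only [ne_eq, smul_eq_zero, not_or]
          exact ⟨ne_of_gt h2ν, hd⟩
        rw [if_neg hx, hτ0, sub_zero]
        have : max ‖x‖ 0 = ‖x‖ := max_eq_left (norm_nonneg x)
        rw [this, div_self (ne_of_gt (norm_pos_iff.mpr hx)), one_smul, hxd]
      · have hτpos : 0 < τ := lt_of_le_of_ne hτ (Ne.symm hτ0)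
        have heqcs : (inner ℝ z d : ℝ) = ‖z‖ * ‖d‖ := by rw [hnz]; exact heq1
        have hkey : ‖d‖ • z = ‖z‖ • d := inner_eq_norm_mul_iff_real.mp heqcs
        rw [hnz] at hkey
        have hdz : d = (‖d‖ / τ) • z := by
          symm
          rw [show (‖d‖ / τ) • z = (1 / τ) • (‖d‖ • z) by rw [smul_smul]; congr 1; ring,
            hkey, smul_smul, one_div_mul_cancel hτ0, one_smul]
        have hxz : x = (1 + 2 * ν * ‖d‖ / τ) • z := by
          have hx' : x = z + (2 * ν) • d := by rw [hzdef]; abel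
          rw [hx']
          conv_lhs => rw [hdz]
          rw [smul_smul, show (2 * ν) * (‖d‖ / τ) = 2 * ν * ‖d‖ / τ from by ring,
            add_smul, one_smul]
        have hcoef : (0:ℝ) < 1 + 2 * ν * ‖d‖ / τ := by positivity
        have hsx : ‖x‖ = τ + 2 * ν * ‖d‖ := by
          rw [hxz, norm_smul, Real.norm_eq_abs, abs_of_pos hcoef, hnz]
          field_simp
        have hx : x ≠ 0 := by
          intro h0
          rw [h0, norm_zero] at hsx
          nlinarith
        rw [if_neg hx]
        have hmax : max (‖x‖ - τ) 0 = 2 * ν * ‖d‖ := by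
          rw [hsx]
          have h2d : (0:ℝ) < 2 * ν * ‖d‖ := by positivity
          rw [max_eq_left (by linarith : (0:ℝ) ≤ τ + 2 * ν * ‖d‖ - τ)]
          ring
        rw [hmax, hsx]
        rw [show ((2 * ν * ‖d‖ / (τ + 2 * ν * ‖d‖)) • x : E) =
            (2 * ν * ‖d‖ / (τ + 2 * ν * ‖d‖) * (1 + 2 * ν * ‖d‖ / τ)) • z by
          rw [hxz, smul_smul]]
        conv_lhs => rw [hdz]
        rw [smul_smul]
        congr 1
        have hden : τ + 2 * ν * ‖d‖ ≠ 0 := by positivity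
        field_simp

theorem stmt_1 (ν τ : ℝ) (hν : 0 < ν) (hτ : 0 ≤ τ)
    (S D : Matrix (Fin 3) (Fin 3) ℝ) (hS : S.IsSymm) (hD : D.IsSymm) :
    ((2 * ν) • D = if S = 0 then 0 else (max (fnorm S - τ) 0 / fnorm S) • S) ↔
      (fnorm (S - (2 * ν) • D) ≤ τ ∧
        fdot (S - (2 * ν) • D) D ≥ τ * fnorm D) := by
  have hcond : (S = 0) ↔ (toE S = 0) :=
    ⟨fun h => by rw [h, toE_zero], fun h => toE_inj (h.trans toE_zero.symm)⟩
  have habs := abstract_bingham ν τ hν hτ (toE S) (toE D)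
  rw [← fnorm_toE, ← fnorm_toE, ← toE_smul, ← toE_sub, ← fdot_toE, ← fnorm_toE] at habs
  constructor
  · intro h
    apply habs.mp
    by_cases hS0 : S = 0
    · rw [if_pos hS0] at h
      rw [if_pos (hcond.mp hS0), h, toE_zero]
    · rw [if_neg hS0] at h
      rw [if_neg (fun h' => hS0 (hcond.mpr h')), h, toE_smul]
  · intro h
    have h' := habs.mpr h
    by_cases hS0 : S = 0
    · rw [if_pos (hcond.mp hS0)] at h'
      rw [if_pos hS0]
      exact toE_inj (h'.trans toE_zero.symm)
    · rw [if_neg (fun h'' => hS0 (hcond.mpr h''))] at h'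
      rw [if_neg hS0]
      exact toE_inj (h'.trans (toE_smul _ _).symm)
end

section
/- Let γ>0, s*≥0 and let s, v be vectors in ℝ³. The following are equivalent: (i) γv = ((|s| - s*)⁺/|s|) s (with the convention that the right side is 0 when s = 0); (ii) setting z := s - γv, one has |z| ≤ s* and z·v ≥ s*|v|. -/
open scoped Classical

theorem stmt_4 (γ sstar : ℝ) (hγ : 0 < γ) (hs : 0 ≤ sstar)
    (s v : EuclideanSpace ℝ (Fin 3)) :
    (γ • v = if s = 0 then 0 else (max (‖s‖ - sstar) 0 / ‖s‖) • s) ↔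
      (‖s - γ • v‖ ≤ sstar ∧ (inner ℝ (s - γ • v) v : ℝ) ≥ sstar * ‖v‖) := by
  constructor
  · intro h
    by_cases hs0 : s = 0
    · rw [if_pos hs0] at h
      have hv : v = 0 := by
        rcases smul_eq_zero.mp h with h' | h'
        · exact absurd h' hγ.ne'
        · exact h'
      simp [hs0, hv, hs]
    · rw [if_neg hs0] at h
      have hns : (0:ℝ) < ‖s‖ := norm_pos_iff.mpr hs0
      by_cases hcase : ‖s‖ ≤ sstar
      · have hm : max (‖s‖ - sstar) 0 = 0 := max_eq_right (by linarith)
        rw [hm] at h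
        simp only [zero_div, zero_smul] at h
        have hv : v = 0 := by
          rcases smul_eq_zero.mp h with h' | h'
          · exact absurd h' hγ.ne'
          · exact h'
        constructor
        · simpa [hv] using hcase
        · simp [hv]
      · push_neg at hcase
        have hm : max (‖s‖ - sstar) 0 = ‖s‖ - sstar := max_eq_left (by linarith)
        rw [hm] at h
        set c : ℝ := (‖s‖ - sstar) / ‖s‖ with hc
        have hc0 : 0 ≤ c := div_nonneg (by linarith) hns.le
        have hz : s - γ • v = (sstar / ‖s‖) • s := by
          rw [h, show s - c • s = (1-c) • s by rw [sub_smul, one_smul]]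
          congr 1
          rw [hc]
          field_simp
          ring
        have hv : v = (c / γ) • s := by
          have : γ • v = γ • ((c / γ) • s) := by
            rw [h, smul_smul]
            congr 1
            field_simp
          exact smul_right_injective _ hγ.ne' this
        constructor
        · rw [hz, norm_smul, Real.norm_eq_abs, abs_of_nonneg (div_nonneg hs hns.le)]
          rw [div_mul_cancel₀ _ hns.ne']
        · rw [hz, hv, real_inner_smul_left, real_inner_smul_right,
            real_inner_self_eq_norm_sq, norm_smul, Real.norm_eq_abs,
            abs_of_nonneg (div_nonneg hc0 hγ.le)]
          have : sstar / ‖s‖ * (c / γ * ‖s‖ ^ 2) = sstar * (c / γ * ‖s‖) := by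
            field_simp
          rw [this]
  · rintro ⟨h1, h2⟩
    have hCS := real_inner_le_norm (s - γ • v) v
    by_cases hv : v = 0
    · subst hv
      rw [smul_zero]
      by_cases hs0 : s = 0
      · simp [hs0]
      · rw [if_neg hs0]
        have : ‖s‖ ≤ sstar := by simpa using h1
        rw [max_eq_right (by linarith), zero_div, zero_smul]
    · have hvn : (0:ℝ) < ‖v‖ := norm_pos_iff.mpr hv
      have hzn : ‖s - γ • v‖ = sstar := by nlinarith
      have heq : (inner ℝ (s - γ • v) v : ℝ) = ‖s - γ • v‖ * ‖v‖ := by nlinarith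
      have hsmul : ‖v‖ • (s - γ • v) = sstar • v := by
        rw [← hzn]
        exact inner_eq_norm_mul_iff_real.mp heq
      have hzv : s - γ • v = (sstar / ‖v‖) • v := by
        have : ‖v‖ • ((sstar / ‖v‖) • v) = sstar • v := by
          rw [smul_smul, mul_div_cancel₀ _ hvn.ne']
        exact smul_right_injective _ hvn.ne' (hsmul.trans this.symm)
      have hsv : s = (sstar / ‖v‖ + γ) • v := by
        have := hzv
        rw [sub_eq_iff_eq_add] at this
        rw [this, add_smul]
      have hk : (0:ℝ) < sstar / ‖v‖ + γ := by positivity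
      have hns : ‖s‖ = sstar + γ * ‖v‖ := by
        rw [hsv, norm_smul, Real.norm_eq_abs, abs_of_nonneg hk.le]
        field_simp
      have hs0 : s ≠ 0 := by
        rw [hsv]
        exact smul_ne_zero hk.ne' hv
      rw [if_neg hs0, hns]
      have hm : max (sstar + γ * ‖v‖ - sstar) 0 = γ * ‖v‖ := by
        rw [max_eq_left (by have := mul_pos hγ hvn; linarith)]
        ring
      rw [hm, hsv, smul_smul]
      congr 1
      field_simp
end
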